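/- Hitting time of full capacity for the lower envelope (Lemma D.1): fix p ∈ {1,…,I} and assume δ_p := λ_p − μ(Σ_{i=1}^{p} C_i − 1) > 0. Let [m_s, M_s] = F([0, C], u_1⋯u_s) be the aggregated-envelope trajectory started from the bottom state 0 = (0,…,0) and the top state C = (C_1,…,C_I), and let τ^{(p)} = min{t ≥ 0 : (m_t)_p = C_p} be the first time the p-th component of the lower envelope hits C_p. Then E[τ^{(p)}] ≤ Λ C_p/δ_p. -/

import Mathlib

open MeasureTheory Finset ENNReal

namespace ATO

/-- Events: joint arrivals `d A` for subsets `A`, and joint-return services `s i j = r_j^i`. -/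
inductive Ev (I : ℕ) where
  | d : Finset (Fin I) → Ev I
  | s : Fin I → ℕ → Ev I

instance (I : ℕ) : MeasurableSpace (Ev I) := ⊤

/-- Valid events: arrivals for nonempty `A`, services `r_j^i` with `1 ≤ j ≤ C i`. -/
def ValidEv {I : ℕ} (C : Fin I → ℕ) : Ev I → Prop
  | .d A => A.Nonempty
  | .s i j => 1 ≤ j ∧ j ≤ C i

/-- The detailed state space `N`: coordinates indexed by the nonempty subsets `A`
(the `∅` coordinate is forced to `0`), with `∑_{A ∋ i} n_A ≤ C_i` for every `i`. -/
def Nspace {I : ℕ} (C : Fin I → ℕ) : Set (Finset (Fin I) → ℕ) :=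
  {n | n ∅ = 0 ∧ ∀ i, (∑ A ∈ Finset.univ.filter (fun A => i ∈ A), n A) ≤ C i}

/-- The projection `ψ : N → X`, `ψ(n)_i = ∑_{A ∋ i} n_A`. -/
def psi {I : ℕ} (n : Finset (Fin I) → ℕ) : Fin I → ℕ :=
  fun i => ∑ A ∈ Finset.univ.filter (fun A => i ∈ A), n A

/-- The projected state space `X = {0,…,C 1} × ⋯ × {0,…,C I}`. -/
def Xspace {I : ℕ} (C : Fin I → ℕ) : Set (Fin I → ℕ) := {x | ∀ i, x i ≤ C i}

/-- The enumeration `A_k^i` of the subsets of `{i,…,I}` containing `i` (0-based indices):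
an element `t > i` belongs to `A_k^i` iff the binary digit of `k` in position `I - 1 - t`
vanishes. -/
def Aset {I : ℕ} (i : Fin I) (k : ℕ) : Finset (Fin I) :=
  Finset.univ.filter (fun t => t = i ∨ (i < t ∧ Nat.testBit k (I - 1 - t.val) = false))

/-- Partial sums `∑_{ℓ=0}^{k-1} n_{A_ℓ^i}`. -/
def psum {I : ℕ} (i : Fin I) (n : Finset (Fin I) → ℕ) (k : ℕ) : ℕ :=
  ∑ l ∈ Finset.range k, n (Aset i l)

/-- The transition function `f̃` of the detailed chain: a demand `d A` adds `ε_{A^{(n)}}`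
where `A^{(n)} = {i ∈ A : ψ(n)_i < C_i}` (no change if `A^{(n)} = ∅`); a service `r_j^i`
removes `ε_{A_k^i}` for the minimal `k` with `∑_{ℓ=0}^{k} n_{A_ℓ^i} ≥ j`, if
`∑_{ℓ} n_{A_ℓ^i} ≥ j`, and otherwise does nothing. -/
noncomputable def ftil {I : ℕ} (C : Fin I → ℕ) (n : Finset (Fin I) → ℕ) :
    Ev I → (Finset (Fin I) → ℕ)
  | .d A => fun B =>
      n B + if B = A.filter (fun i => psi n i < C i) ∧ B.Nonempty then 1 else 0
  | .s i j => fun B =>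
      n B - if j ≤ psum i n (2 ^ (I - 1 - i.val))
              ∧ B = Aset i (sInf {k | j ≤ psum i n (k + 1)}) then 1 else 0

/-- The supremum chain `f̄` on `X` (componentwise supremum over all detailed states
projecting to `x`). -/
noncomputable def fbar {I : ℕ} (C : Fin I → ℕ) (x : Fin I → ℕ) (a : Ev I) : Fin I → ℕ :=
  fun p => sSup ((fun n => psi (ftil C n a) p) '' {n | n ∈ Nspace C ∧ psi n = x})

/-- The infimum chain `f_inf` on `X` (componentwise infimum over all detailed states
projecting to `x`). -/
noncomputable def finf {I : ℕ} (C : Fin I → ℕ) (x : Fin I → ℕ) (a : Ev I) : Fin I → ℕ :=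
  fun p => sInf ((fun n => psi (ftil C n a) p) '' {n | n ∈ Nspace C ∧ psi n = x})

/-- One step of the aggregated envelope chain `F([m,M],a)`. -/
noncomputable def Fenv {I : ℕ} (C : Fin I → ℕ) (m M : Fin I → ℕ) (a : Ev I) :
    (Fin I → ℕ) × (Fin I → ℕ) :=
  (fun p => sInf ((fun x => finf C x a p) '' Set.Icc m M),
   fun p => sSup ((fun x => fbar C x a p) '' Set.Icc m M))

/-- Iteration of the aggregated envelope chain along a word (head applied first). -/
noncomputable def FenvIter {I : ℕ} (C : Fin I → ℕ) :
    (Fin I → ℕ) → (Fin I → ℕ) → List (Ev I) → (Fin I → ℕ) × (Fin I → ℕ)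
  | m, M, [] => (m, M)
  | m, M, a :: w => FenvIter C (Fenv C m M a).1 (Fenv C m M a).2 w

/-- Iterated application of a transition function along a word (head applied first). -/
def iter {I : ℕ} {σ : Type*} (f : σ → Ev I → σ) : σ → List (Ev I) → σ
  | x, [] => x
  | x, a :: w => iter f (f x a) w

/-- The backward word `u_t u_{t-1} ⋯ u_1` (with `u_t` applied first). -/
def bword {I : ℕ} (ω : ℕ → Ev I) (t : ℕ) : List (Ev I) :=
  ((List.range t).reverse).map fun s => ω (s + 1)

/-- The forward word `u_1 u_2 ⋯ u_t` (with `u_1` applied first). -/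
def fword {I : ℕ} (ω : ℕ → Ev I) (t : ℕ) : List (Ev I) :=
  (List.range t).map fun s => ω (s + 1)

/-- The "hat" operation `x̂_i = max{x_i − (x_1 + ⋯ + x_{i-1}), 0}`. -/
def xhat {I : ℕ} (x : Fin I → ℕ) (i : Fin I) : ℕ :=
  x i - ∑ t ∈ Finset.univ.filter (fun t => t < i), x t

/-- The distribution `ν` on events: `ν (d A) = λ_A / Λ` and `ν (r_j^i) = μ / Λ`. -/
noncomputable def probJ {I : ℕ} (C : Fin I → ℕ) (lam : Finset (Fin I) → ℝ) (μv Λ : ℝ) :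
    Ev I → ℝ≥0∞
  | .d A => if A.Nonempty then ENNReal.ofReal (lam A / Λ) else 0
  | .s i j => if 1 ≤ j ∧ j ≤ C i then ENNReal.ofReal (μv / Λ) else 0

section AuxDet

open Classical

variable {I : ℕ}

/-! ### Countability of events -/

private noncomputable def evEquiv (I : ℕ) : Ev I ≃ (Finset (Fin I)) ⊕ (Fin I × ℕ) where
  toFun e := match e with
    | .d A => .inl A
    | .s i j => .inr (i, j)
  invFun x := match x with
    | .inl A => .d A
    | .inr ij => .s ij.1 ij.2
  left_inv e := by cases e <;> rfl
  right_inv x := by rcases x with A | ⟨i, j⟩ <;> rfl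

instance : Countable (Ev I) := Countable.of_equiv _ (evEquiv I).symm

private lemma tsum_ev (h : Ev I → ℝ≥0∞) :
    ∑' e, h e = (∑ A : Finset (Fin I), h (.d A)) + ∑' ij : Fin I × ℕ, h (.s ij.1 ij.2) := by
  classical
  have hsplit : ∀ e : Ev I,
      h e = (match e with | .d A => h (.d A) | .s _ _ => 0)
        + (match e with | .d _ => 0 | .s i j => h (.s i j)) := by
    intro e; cases e <;> simp
  rw [tsum_congr hsplit, ENNReal.tsum_add]
  congr 1
  · rw [tsum_eq_sum (s := Finset.univ.image Ev.d)
      (by rintro (A | ⟨i, j⟩) hb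
          · exact absurd (Finset.mem_image.2 ⟨A, Finset.mem_univ _, rfl⟩) hb
          · simp)]
    rw [Finset.sum_image (by intro a _ b _ hab; injection hab)]
  · have hg : Function.Injective (fun ij : Fin I × ℕ => Ev.s ij.1 ij.2) := by
      rintro ⟨i, j⟩ ⟨i', j'⟩ hab
      simpa [Prod.ext_iff] using (by injection hab; constructor <;> assumption :
        i = i' ∧ j = j')
    have := hg.tsum_eq (f := fun e : Ev I =>
        (match e with | .d _ => 0 | .s i j => h (.s i j) : ℝ≥0∞))
      (by intro e he
          rcases e with A | ⟨i, j⟩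
          · simp at he
          · exact ⟨(i, j), rfl⟩)
    exact this.symm

/-! ### Detailed-level lemmas -/

private lemma psi_ftil_d (C : Fin I → ℕ) (n : Finset (Fin I) → ℕ) (A : Finset (Fin I))
    (q : Fin I) :
    psi (ftil C n (.d A)) q = psi n q +
      (if q ∈ A.filter (fun i => psi n i < C i) ∧ (A.filter (fun i => psi n i < C i)).Nonempty
        then 1 else 0) := by
  classical
  set A' := A.filter (fun i => psi n i < C i) with hA'
  show (∑ B ∈ Finset.univ.filter (fun B => q ∈ B),
      (n B + if B = A' ∧ B.Nonempty then 1 else 0)) = _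
  rw [Finset.sum_add_distrib]
  congr 1
  by_cases hne : A'.Nonempty
  · have : ∀ B ∈ Finset.univ.filter (fun B => q ∈ B),
        (if B = A' ∧ B.Nonempty then 1 else 0) = (if B = A' then 1 else 0) := by
      intro B _
      by_cases hB : B = A'
      · subst hB; simp [hne]
      · simp [hB]
    rw [Finset.sum_congr rfl this, Finset.sum_ite_eq' (Finset.univ.filter (fun B => q ∈ B)) A'
      (fun _ => 1)]
    simp [hne]
  · have : ∀ B ∈ Finset.univ.filter (fun B => q ∈ B),
        (if B = A' ∧ B.Nonempty then 1 else 0) = 0 := by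
      intro B _
      have : ¬ (B = A' ∧ B.Nonempty) := by rintro ⟨rfl, hBne⟩; exact hne hBne
      simp [this]
    rw [Finset.sum_congr rfl this]
    simp [hne]

private lemma psi_ftil_s_le (C : Fin I → ℕ) (n : Finset (Fin I) → ℕ) (i : Fin I) (j : ℕ)
    (q : Fin I) : psi (ftil C n (.s i j)) q ≤ psi n q := by
  refine Finset.sum_le_sum fun B _ => ?_
  exact Nat.sub_le _ _

private lemma psi_ftil_s_ge (C : Fin I → ℕ) (n : Finset (Fin I) → ℕ) (i : Fin I) (j : ℕ)
    (q : Fin I) : psi n q ≤ psi (ftil C n (.s i j)) q + 1 := by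
  classical
  set K := Aset i (sInf {k | j ≤ psum i n (k + 1)}) with hK
  set cnd := fun B : Finset (Fin I) =>
    j ≤ psum i n (2 ^ (I - 1 - i.val)) ∧ B = K with hcnd
  have h1 : psi n q ≤ psi (ftil C n (.s i j)) q +
      ∑ B ∈ Finset.univ.filter (fun B => q ∈ B), (if cnd B then 1 else 0) := by
    show (∑ B ∈ Finset.univ.filter (fun B => q ∈ B), n B) ≤
      (∑ B ∈ Finset.univ.filter (fun B => q ∈ B), (n B - if cnd B then 1 else 0)) + _
    rw [← Finset.sum_add_distrib]
    refine Finset.sum_le_sum fun B _ => ?_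
    omega
  refine h1.trans (Nat.add_le_add_left ?_ _)
  have : ∀ B ∈ Finset.univ.filter (fun B => q ∈ B),
      (if cnd B then 1 else 0) ≤ (if B = K then 1 else 0) := by
    intro B _
    by_cases hB : cnd B
    · rw [if_pos hB, if_pos hB.2]
    · simp [hB]
  refine (Finset.sum_le_sum this).trans ?_
  rw [Finset.sum_ite_eq' (Finset.univ.filter (fun B => q ∈ B)) K (fun _ => 1)]
  split <;> simp

private lemma not_mem_aset_of_lt {p i : Fin I} (h : p < i) (k : ℕ) : p ∉ Aset i k := by
  simp only [Aset, Finset.mem_filter, Finset.mem_univ, true_and]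
  rintro (rfl | ⟨hlt, _⟩)
  · exact absurd h (lt_irrefl _)
  · exact absurd (h.trans hlt) (lt_irrefl _)

private lemma mem_aset_self (i : Fin I) (k : ℕ) : i ∈ Aset i k := by
  simp [Aset]

private lemma psi_ftil_s_eq_of_lt (C : Fin I → ℕ) (n : Finset (Fin I) → ℕ) {p i : Fin I}
    (h : p < i) (j : ℕ) : psi (ftil C n (.s i j)) p = psi n p := by
  classical
  refine Finset.sum_congr rfl fun B hB => ?_
  have hpB : p ∈ B := (Finset.mem_filter.1 hB).2
  have : ¬ (j ≤ psum i n (2 ^ (I - 1 - i.val)) ∧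
      B = Aset i (sInf {k | j ≤ psum i n (k + 1)})) := by
    rintro ⟨-, rfl⟩
    exact not_mem_aset_of_lt h _ hpB
  simp [ftil, this]

private lemma aset_inj (i : Fin I) {l₁ l₂ : ℕ} (h₁ : l₁ < 2 ^ (I - 1 - i.val))
    (h₂ : l₂ < 2 ^ (I - 1 - i.val)) (h : Aset i l₁ = Aset i l₂) : l₁ = l₂ := by
  apply Nat.eq_of_testBit_eq
  intro b
  by_cases hb : b < I - 1 - i.val
  · have hiI : i.val < I := i.isLt
    have hbI : I - 1 - b < I := by omega
    set t : Fin I := ⟨I - 1 - b, hbI⟩ with ht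
    have hit : i < t := by
      rw [Fin.lt_def]
      show i.val < I - 1 - b
      omega
    have hmem : ∀ l, (t ∈ Aset i l ↔ Nat.testBit l b = false) := by
      intro l
      simp only [Aset, Finset.mem_filter, Finset.mem_univ, true_and]
      have hval : I - 1 - t.val = b := by
        show I - 1 - (I - 1 - b) = b
        omega
      rw [hval]
      constructor
      · rintro (h' | h')
        · exfalso
          have := congrArg Fin.val h'
          simp only [ht] at this
          omega
        · exact h'.2
      · intro h'
        exact Or.inr ⟨hit, h'⟩
    have hmemeq : (t ∈ Aset i l₁) ↔ (t ∈ Aset i l₂) := by rw [h]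
    rw [hmem, hmem] at hmemeq
    cases hb1 : Nat.testBit l₁ b <;> cases hb2 : Nat.testBit l₂ b <;> simp_all
  · have hb1 : Nat.testBit l₁ b = false :=
      Nat.testBit_lt_two_pow (lt_of_lt_of_le h₁ (Nat.pow_le_pow_right (by norm_num) (by omega)))
    have hb2 : Nat.testBit l₂ b = false :=
      Nat.testBit_lt_two_pow (lt_of_lt_of_le h₂ (Nat.pow_le_pow_right (by norm_num) (by omega)))
    rw [hb1, hb2]

private lemma psum_le_psi (i : Fin I) (n : Finset (Fin I) → ℕ) :
    psum i n (2 ^ (I - 1 - i.val)) ≤ psi n i := by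
  classical
  have hinj : ∀ l₁ ∈ Finset.range (2 ^ (I - 1 - i.val)), ∀ l₂ ∈ Finset.range (2 ^ (I - 1 - i.val)),
      Aset i l₁ = Aset i l₂ → l₁ = l₂ := by
    intro l₁ h₁ l₂ h₂ h
    exact aset_inj i (Finset.mem_range.1 h₁) (Finset.mem_range.1 h₂) h
  have himg : (∑ B ∈ (Finset.range (2 ^ (I - 1 - i.val))).image (Aset i), n B)
      = ∑ l ∈ Finset.range (2 ^ (I - 1 - i.val)), n (Aset i l) := Finset.sum_image hinj
  show (∑ l ∈ Finset.range (2 ^ (I - 1 - i.val)), n (Aset i l)) ≤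
      ∑ B ∈ Finset.univ.filter (fun B => i ∈ B), n B
  rw [← himg]
  refine Finset.sum_le_sum_of_subset ?_
  intro B hB
  rcases Finset.mem_image.1 hB with ⟨l, _, rfl⟩
  simp [Finset.mem_filter, mem_aset_self]

private lemma ftil_s_eq_of_nofire (C : Fin I → ℕ) (n : Finset (Fin I) → ℕ) (i : Fin I) {j : ℕ}
    (h : psi n i < j) : ftil C n (.s i j) = n := by
  funext B
  have : ¬ (j ≤ psum i n (2 ^ (I - 1 - i.val)) ∧
      B = Aset i (sInf {k | j ≤ psum i n (k + 1)})) := by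
    rintro ⟨hf, -⟩
    exact absurd (hf.trans (psum_le_psi i n)) (by omega)
  simp [ftil, this]

private lemma ftil_mem_Nspace (C : Fin I → ℕ) {n : Finset (Fin I) → ℕ} (hn : n ∈ Nspace C)
    (e : Ev I) : ftil C n e ∈ Nspace C := by
  classical
  obtain ⟨h0, hcap⟩ := hn
  rcases e with A | ⟨i, j⟩
  · constructor
    · show n ∅ + _ = 0
      rw [h0]
      simp [Finset.not_nonempty_empty]
    · intro q
      have := psi_ftil_d C n A q
      show psi (ftil C n (.d A)) q ≤ C q
      rw [this]
      by_cases hq : q ∈ A.filter (fun i => psi n i < C i) ∧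
          (A.filter (fun i => psi n i < C i)).Nonempty
      · have hlt : psi n q < C q := (Finset.mem_filter.1 hq.1).2
        rw [if_pos hq]
        omega
      · simp only [hq, if_false]
        exact hcap q
  · constructor
    · show n ∅ - _ = 0
      rw [h0]
      exact Nat.zero_sub _
    · intro q
      exact le_trans (psi_ftil_s_le C n i j q) (hcap q)

/-! ### The singleton detailed state -/

private noncomputable def nsing (x : Fin I → ℕ) : Finset (Fin I) → ℕ :=
  fun B => ∑ q, if B = {q} then x q else 0

private lemma psi_nsing (x : Fin I → ℕ) : psi (nsing x) = x := by
  classical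
  funext q
  simp only [psi, nsing]
  rw [Finset.sum_comm]
  have hr : ∀ r : Fin I,
      (∑ B ∈ Finset.univ.filter (fun B => q ∈ B), if B = ({r} : Finset (Fin I)) then x r else 0)
        = if q = r then x r else 0 := by
    intro r
    rw [Finset.sum_ite_eq' (Finset.univ.filter (fun B => q ∈ B)) ({r} : Finset (Fin I))
      (fun _ => x r)]
    by_cases hqr : q = r
    · subst hqr; simp
    · simp [Finset.mem_filter, hqr, Ne.symm hqr]
  calc (∑ r : Fin I, ∑ B ∈ Finset.univ.filter (fun B => q ∈ B),
          if B = ({r} : Finset (Fin I)) then x r else 0)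
      = ∑ r : Fin I, if q = r then x r else 0 := Finset.sum_congr rfl (fun r _ => hr r)
    _ = x q := by simp

private lemma nsing_mem (C : Fin I → ℕ) {x : Fin I → ℕ} (hx : ∀ i, x i ≤ C i) :
    nsing x ∈ Nspace C := by
  classical
  constructor
  · show (∑ q, if (∅ : Finset (Fin I)) = {q} then x q else 0) = 0
    refine Finset.sum_eq_zero fun q _ => ?_
    have : (∅ : Finset (Fin I)) ≠ {q} := by
      intro h
      exact absurd (h ▸ Finset.mem_singleton_self q) (Finset.notMem_empty q)
    simp [this]
  · intro i
    have := psi_nsing x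
    show psi (nsing x) i ≤ C i
    rw [this]
    exact hx i

end AuxDet
section AuxEnv

open Classical

variable {I : ℕ}

private lemma finf_ge (C : Fin I → ℕ) {x : Fin I → ℕ} (hx : ∀ i, x i ≤ C i) (e : Ev I)
    (q : Fin I) {c : ℕ}
    (h : ∀ n ∈ Nspace C, psi n = x → c ≤ psi (ftil C n e) q) : c ≤ finf C x e q := by
  refine le_csInf ⟨_, ⟨nsing x, ⟨nsing_mem C hx, psi_nsing x⟩, rfl⟩⟩ ?_
  rintro b ⟨n, ⟨hn, hpsi⟩, rfl⟩
  exact h n hn hpsi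

private lemma fbar_le (C : Fin I → ℕ) {x : Fin I → ℕ} (hx : ∀ i, x i ≤ C i) (e : Ev I)
    (q : Fin I) : fbar C x e q ≤ C q := by
  refine csSup_le ⟨_, ⟨nsing x, ⟨nsing_mem C hx, psi_nsing x⟩, rfl⟩⟩ ?_
  rintro b ⟨n, ⟨hn, hpsi⟩, rfl⟩
  exact (ftil_mem_Nspace C hn e).2 q

private lemma finf_le_fbar (C : Fin I → ℕ) {x : Fin I → ℕ} (hx : ∀ i, x i ≤ C i) (e : Ev I)
    (q : Fin I) : finf C x e q ≤ fbar C x e q := by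
  have hb : psi (ftil C (nsing x) e) q ∈
      ((fun n => psi (ftil C n e) q) '' {n | n ∈ Nspace C ∧ psi n = x}) :=
    ⟨nsing x, ⟨nsing_mem C hx, psi_nsing x⟩, rfl⟩
  refine le_trans (csInf_le (OrderBot.bddBelow _) hb) (le_csSup ⟨C q, ?_⟩ hb)
  rintro b ⟨n, ⟨hn, hpsi⟩, rfl⟩
  exact (ftil_mem_Nspace C hn e).2 q

private lemma Fenv_fst_ge (C : Fin I → ℕ) {m M : Fin I → ℕ} (hmM : ∀ i, m i ≤ M i) (e : Ev I)
    (q : Fin I) {c : ℕ} (h : ∀ x, x ∈ Set.Icc m M → c ≤ finf C x e q) :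
    c ≤ (Fenv C m M e).1 q := by
  refine le_csInf ⟨_, ⟨m, Set.mem_Icc.2 ⟨le_refl _, Pi.le_def.mpr hmM⟩, rfl⟩⟩ ?_
  rintro b ⟨x, hx, rfl⟩
  exact h x hx

private lemma Fenv_snd_le (C : Fin I → ℕ) {m M : Fin I → ℕ} (hmM : ∀ i, m i ≤ M i)
    (hMC : ∀ i, M i ≤ C i) (e : Ev I) (q : Fin I) : (Fenv C m M e).2 q ≤ C q := by
  refine csSup_le ⟨_, ⟨m, Set.mem_Icc.2 ⟨le_refl _, Pi.le_def.mpr hmM⟩, rfl⟩⟩ ?_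
  rintro b ⟨x, hx, rfl⟩
  exact fbar_le C (fun i => (Pi.le_def.1 hx.2 i).trans (hMC i)) e q

private lemma Fenv_fst_le_snd (C : Fin I → ℕ) {m M : Fin I → ℕ} (hmM : ∀ i, m i ≤ M i)
    (hMC : ∀ i, M i ≤ C i) (e : Ev I) (q : Fin I) :
    (Fenv C m M e).1 q ≤ (Fenv C m M e).2 q := by
  have hmmem : m ∈ Set.Icc m M := Set.mem_Icc.2 ⟨le_refl _, Pi.le_def.mpr hmM⟩
  have hmC : ∀ i, m i ≤ C i := fun i => (hmM i).trans (hMC i)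
  have h1 : (Fenv C m M e).1 q ≤ finf C m e q := csInf_le (OrderBot.bddBelow _) ⟨m, hmmem, rfl⟩
  have h2 : fbar C m e q ≤ (Fenv C m M e).2 q := by
    refine le_csSup ⟨C q, ?_⟩ ⟨m, hmmem, rfl⟩
    rintro b ⟨x, hx, rfl⟩
    exact fbar_le C (fun i => (Pi.le_def.1 hx.2 i).trans (hMC i)) e q
  exact h1.trans ((finf_le_fbar C hmC e q).trans h2)

private def EnvInv (C : Fin I → ℕ) (q : (Fin I → ℕ) × (Fin I → ℕ)) : Prop :=
  (∀ i, q.1 i ≤ q.2 i) ∧ (∀ i, q.2 i ≤ C i)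

private lemma envInv_fenv (C : Fin I → ℕ) {m M : Fin I → ℕ} (h : EnvInv C (m, M)) (e : Ev I) :
    EnvInv C (Fenv C m M e) :=
  ⟨fun q => Fenv_fst_le_snd C h.1 h.2 e q, fun q => Fenv_snd_le C h.1 h.2 e q⟩

private lemma envInv_fenvIter (C : Fin I → ℕ) :
    ∀ (w : List (Ev I)) (m M : Fin I → ℕ), EnvInv C (m, M) → EnvInv C (FenvIter C m M w)
  | [], _, _, h => h
  | a :: w, m, M, h => by
    have h2 := envInv_fenv C h a
    show EnvInv C (FenvIter C (Fenv C m M a).1 (Fenv C m M a).2 w)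
    exact envInv_fenvIter C w _ _ h2

private lemma val_d_mem (C : Fin I → ℕ) {m M : Fin I → ℕ} (hmM : ∀ i, m i ≤ M i)
    (hMC : ∀ i, M i ≤ C i) {p : Fin I} {A : Finset (Fin I)} (hpA : p ∈ A) (hmp : m p < C p) :
    m p + 1 ≤ (Fenv C m M (.d A)).1 p := by
  refine Fenv_fst_ge C hmM _ p ?_
  intro x hx
  have hxC : ∀ i, x i ≤ C i := fun i => (Pi.le_def.1 hx.2 i).trans (hMC i)
  refine finf_ge C hxC _ p ?_
  intro n hn hpsi
  rw [psi_ftil_d C n A p]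
  have hxm : m p ≤ x p := Pi.le_def.1 hx.1 p
  have hpsip : psi n p = x p := by rw [hpsi]
  by_cases hxp : x p = m p
  · have hpA' : p ∈ A.filter (fun i => psi n i < C i) :=
      Finset.mem_filter.2 ⟨hpA, by rw [hpsip, hxp]; exact hmp⟩
    rw [if_pos ⟨hpA', ⟨p, hpA'⟩⟩]
    omega
  · have hlt : m p < x p := lt_of_le_of_ne hxm (Ne.symm hxp)
    rw [hpsip]
    exact le_trans hlt (Nat.le_add_right _ _)

private lemma val_d_ge (C : Fin I → ℕ) {m M : Fin I → ℕ} (hmM : ∀ i, m i ≤ M i)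
    (hMC : ∀ i, M i ≤ C i) (p : Fin I) (A : Finset (Fin I)) :
    m p ≤ (Fenv C m M (.d A)).1 p := by
  refine Fenv_fst_ge C hmM _ p ?_
  intro x hx
  have hxC : ∀ i, x i ≤ C i := fun i => (Pi.le_def.1 hx.2 i).trans (hMC i)
  refine finf_ge C hxC _ p ?_
  intro n hn hpsi
  rw [psi_ftil_d C n A p]
  have hpsip : psi n p = x p := by rw [hpsi]
  have hxm : m p ≤ x p := Pi.le_def.1 hx.1 p
  rw [hpsip]
  exact le_trans hxm (Nat.le_add_right _ _)

private lemma val_s_ge_sub (C : Fin I → ℕ) {m M : Fin I → ℕ} (hmM : ∀ i, m i ≤ M i)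
    (hMC : ∀ i, M i ≤ C i) (p i : Fin I) (j : ℕ) :
    m p ≤ (Fenv C m M (.s i j)).1 p + 1 := by
  have h : m p - 1 ≤ (Fenv C m M (.s i j)).1 p := by
    refine Fenv_fst_ge C hmM _ p ?_
    intro x hx
    have hxC : ∀ i, x i ≤ C i := fun i => (Pi.le_def.1 hx.2 i).trans (hMC i)
    refine finf_ge C hxC _ p ?_
    intro n hn hpsi
    have h1 := psi_ftil_s_ge C n i j p
    have hpsip : psi n p = x p := by rw [hpsi]
    have hxm : m p ≤ x p := Pi.le_def.1 hx.1 p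
    omega
  omega

private lemma val_s_ge_of_lt (C : Fin I → ℕ) {m M : Fin I → ℕ} (hmM : ∀ i, m i ≤ M i)
    (hMC : ∀ i, M i ≤ C i) {p i : Fin I} (hpi : p < i) (j : ℕ) :
    m p ≤ (Fenv C m M (.s i j)).1 p := by
  refine Fenv_fst_ge C hmM _ p ?_
  intro x hx
  have hxC : ∀ i, x i ≤ C i := fun i => (Pi.le_def.1 hx.2 i).trans (hMC i)
  refine finf_ge C hxC _ p ?_
  intro n hn hpsi
  rw [psi_ftil_s_eq_of_lt C n hpi j]
  have hpsip : psi n p = x p := by rw [hpsi]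
  have hxm : m p ≤ x p := Pi.le_def.1 hx.1 p
  omega

private lemma val_s_ge_eq (C : Fin I → ℕ) {m M : Fin I → ℕ} (hmM : ∀ i, m i ≤ M i)
    (hMC : ∀ i, M i ≤ C i) {p : Fin I} {j : ℕ} (hmp : m p < j) :
    m p ≤ (Fenv C m M (.s p j)).1 p := by
  refine Fenv_fst_ge C hmM _ p ?_
  intro x hx
  have hxC : ∀ i, x i ≤ C i := fun i => (Pi.le_def.1 hx.2 i).trans (hMC i)
  refine finf_ge C hxC _ p ?_
  intro n hn hpsi
  have hpsip : psi n p = x p := by rw [hpsi]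
  have hxm : m p ≤ x p := Pi.le_def.1 hx.1 p
  by_cases hfire : psi n p < j
  · rw [ftil_s_eq_of_nofire C n p hfire]
    omega
  · have h1 := psi_ftil_s_ge C n p j p
    omega

private lemma val_s_ge_big (C : Fin I → ℕ) {m M : Fin I → ℕ} (hmM : ∀ i, m i ≤ M i)
    (hMC : ∀ i, M i ≤ C i) (p : Fin I) {i : Fin I} {j : ℕ} (hCj : C i < j) :
    m p ≤ (Fenv C m M (.s i j)).1 p := by
  refine Fenv_fst_ge C hmM _ p ?_
  intro x hx
  have hxC : ∀ i, x i ≤ C i := fun i => (Pi.le_def.1 hx.2 i).trans (hMC i)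
  refine finf_ge C hxC _ p ?_
  intro n hn hpsi
  have hfire : psi n i < j := lt_of_le_of_lt (hn.2 i) hCj
  rw [ftil_s_eq_of_nofire C n i hfire]
  have hpsip : psi n p = x p := by rw [hpsi]
  have hxm : m p ≤ x p := Pi.le_def.1 hx.1 p
  omega

end AuxEnv
section AuxDrift

open Classical

variable {I : ℕ}

private def demN (p : Fin I) : Ev I → ℕ
  | .d A => if p ∈ A then 1 else 0
  | .s _ _ => 0

private def ddN (C : Fin I → ℕ) (p : Fin I) (mp : ℕ) : Ev I → ℕ
  | .d _ => 0
  | .s i j => if (i < p ∧ j ≤ C i) ∨ (i = p ∧ j ≤ mp) then 1 else 0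

private lemma drift (C : Fin I → ℕ) (hC : ∀ i, 1 ≤ C i)
    (lam : Finset (Fin I) → ℝ) (μv Λ : ℝ) (hΛ0 : 0 < Λ) (hμv : 0 < μv)
    (hlamnn : ∀ A, 0 ≤ lam A)
    (p : Fin I) (δp : ℝ) (hδpos : 0 < δp)
    (hsplit : (∑ A ∈ Finset.univ.filter (fun A => p ∈ A), lam A)
        = δp + μv * ((∑ t ∈ Finset.univ.filter (fun t => t ≤ p), (C t : ℝ)) - 1))
    (hν1 : ∑' e : Ev I, probJ C lam μv Λ e = 1)
    {m M : Fin I → ℕ} (hmM : ∀ i, m i ≤ M i) (hMC : ∀ i, M i ≤ C i) (hmp : m p < C p) :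
    (m p : ℝ≥0∞) + ENNReal.ofReal (δp / Λ)
      ≤ ∑' e : Ev I, probJ C lam μv Λ e * ((Fenv C m M e).1 p : ℝ≥0∞) := by
  classical
  set ν := probJ C lam μv Λ with hν
  set lamp : ℝ := ∑ A ∈ Finset.univ.filter (fun A => p ∈ A), lam A with hlamp
  set SN : ℕ := ∑ t ∈ Finset.univ.filter (fun t => t ≤ p), C t with hSNdef
  have hSN1 : 1 ≤ SN := by
    have hpmem : p ∈ Finset.univ.filter (fun t : Fin I => t ≤ p) := by
      simp [Finset.mem_filter]
    calc 1 ≤ C p := hC p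
      _ ≤ SN := Finset.single_le_sum (fun i _ => Nat.zero_le _) hpmem
  have hSreal : (∑ t ∈ Finset.univ.filter (fun t => t ≤ p), (C t : ℝ)) = (SN : ℝ) := by
    rw [hSNdef]; push_cast; rfl
  -- pointwise inequality
  have hkey : ∀ e : Ev I, ν e * ((m p + demN p e : ℕ) : ℝ≥0∞)
      ≤ ν e * (((Fenv C m M e).1 p + ddN C p (m p) e : ℕ) : ℝ≥0∞) := by
    intro e
    rcases e with A | ⟨i, j⟩
    · by_cases hA : A.Nonempty
      · refine mul_le_mul_right (Nat.cast_le.2 ?_) _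
        by_cases hpA : p ∈ A
        · simp only [demN, ddN, if_pos hpA, add_zero]
          exact val_d_mem C hmM hMC hpA hmp
        · simp only [demN, ddN, if_neg hpA, add_zero]
          exact val_d_ge C hmM hMC p A
      · have : ν (.d A) = 0 := by simp [hν, probJ, hA]
        simp [this]
    · by_cases hv : 1 ≤ j ∧ j ≤ C i
      · refine mul_le_mul_right (Nat.cast_le.2 ?_) _
        simp only [demN, ddN, add_zero]
        rcases lt_trichotomy i p with hip | hip | hip
        · rw [if_pos (Or.inl ⟨hip, hv.2⟩)]
          exact val_s_ge_sub C hmM hMC p i j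
        · subst hip
          by_cases hj : j ≤ m i
          · rw [if_pos (Or.inr ⟨rfl, hj⟩)]
            exact val_s_ge_sub C hmM hMC i i j
          · rw [if_neg (by rintro (⟨h1, -⟩ | ⟨-, h2⟩); exact absurd h1 (lt_irrefl _); exact hj h2),
              Nat.add_zero]
            exact val_s_ge_eq C hmM hMC (Nat.lt_of_not_le hj)
        · rw [if_neg (by
            rintro (⟨h1, -⟩ | ⟨h1, -⟩)
            · exact absurd h1 (lt_asymm hip)
            · exact absurd h1 (by intro h; rw [h] at hip; exact lt_irrefl _ hip)),
            Nat.add_zero]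
          exact val_s_ge_of_lt C hmM hMC hip j
      · have : ν (.s i j) = 0 := by simp [hν, probJ, hv]
        simp [this]
  -- left tsum
  have hL : (∑' e : Ev I, ν e * ((m p + demN p e : ℕ) : ℝ≥0∞))
      = (m p : ℝ≥0∞) + ENNReal.ofReal (lamp / Λ) := by
    have hsplit2 : ∀ e : Ev I, ν e * ((m p + demN p e : ℕ) : ℝ≥0∞)
        = ν e * (m p : ℝ≥0∞) + ν e * (demN p e : ℝ≥0∞) := by
      intro e; push_cast; ring
    rw [tsum_congr hsplit2, ENNReal.tsum_add, ENNReal.tsum_mul_right, hν1, one_mul]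
    congr 1
    rw [tsum_ev]
    have h2 : (∑' ij : Fin I × ℕ, ν (.s ij.1 ij.2) * (demN p (.s ij.1 ij.2) : ℝ≥0∞)) = 0 := by
      simp [demN]
    rw [h2, add_zero]
    have h3 : ∀ A : Finset (Fin I), ν (.d A) * (demN p (.d A) : ℝ≥0∞)
        = if p ∈ A then ENNReal.ofReal (lam A / Λ) else 0 := by
      intro A
      by_cases hpA : p ∈ A
      · have hne : A.Nonempty := ⟨p, hpA⟩
        simp [hν, probJ, demN, hpA, hne]
      · simp [demN, hpA]
    rw [Finset.sum_congr rfl (fun A _ => h3 A), ← Finset.sum_filter,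
      ← ENNReal.ofReal_sum_of_nonneg (fun A _ => div_nonneg (hlamnn A) hΛ0.le),
      ← Finset.sum_div]
  -- right tsum
  have hR : (∑' e : Ev I, ν e * (((Fenv C m M e).1 p + ddN C p (m p) e : ℕ) : ℝ≥0∞))
      = (∑' e : Ev I, ν e * ((Fenv C m M e).1 p : ℝ≥0∞))
        + ∑' e : Ev I, ν e * (ddN C p (m p) e : ℝ≥0∞) := by
    rw [← ENNReal.tsum_add]
    refine tsum_congr ?_
    intro e; push_cast; ring
  -- bound on the dd part
  set Dd : ℝ≥0∞ := ∑' e : Ev I, ν e * (ddN C p (m p) e : ℝ≥0∞) with hDddef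
  set bN : Fin I → ℕ := fun i => if i < p then C i else if i = p then m p else 0 with hbN
  have hib : ∀ i : Fin I, (∑' j : ℕ, ν (.s i j) * (ddN C p (m p) (.s i j) : ℝ≥0∞))
      ≤ (bN i : ℝ≥0∞) * ENNReal.ofReal (μv / Λ) := by
    intro i
    have hpt : ∀ j : ℕ, ν (.s i j) * (ddN C p (m p) (.s i j) : ℝ≥0∞)
        ≤ if 1 ≤ j ∧ j ≤ bN i then ENNReal.ofReal (μv / Λ) else 0 := by
      intro j
      by_cases hv : 1 ≤ j ∧ j ≤ C i
      · by_cases hD : (i < p ∧ j ≤ C i) ∨ (i = p ∧ j ≤ m p)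
        · have hbj : 1 ≤ j ∧ j ≤ bN i := by
            refine ⟨hv.1, ?_⟩
            rcases hD with ⟨hip, hj⟩ | ⟨hip, hj⟩
            · rw [hbN]; simp only [if_pos hip]; exact hj
            · subst hip
              rw [hbN]; simp only [lt_irrefl, if_neg, if_pos rfl]
              simpa using hj
          rw [if_pos hbj]
          have hd1 : (ddN C p (m p) (.s i j) : ℝ≥0∞) = 1 := by simp [ddN, hD]
          have hn1 : ν (.s i j) = ENNReal.ofReal (μv / Λ) := by simp [hν, probJ, hv]
          rw [hd1, hn1, mul_one]
        · have : (ddN C p (m p) (.s i j) : ℝ≥0∞) = 0 := by simp [ddN, hD]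
          rw [this, mul_zero]
          exact zero_le
      · have : ν (.s i j) = 0 := by simp [hν, probJ, hv]
        rw [this, zero_mul]
        exact zero_le
    refine le_trans (Summable.tsum_le_tsum hpt ENNReal.summable ENNReal.summable) ?_
    rw [tsum_eq_sum (s := Finset.Icc 1 (bN i))
      (by intro j hj; exact if_neg (fun h => hj (Finset.mem_Icc.2 h)))]
    have hcongr : ∀ b ∈ Finset.Icc 1 (bN i),
        (if 1 ≤ b ∧ b ≤ bN i then ENNReal.ofReal (μv / Λ) else 0) = ENNReal.ofReal (μv / Λ) :=
      fun b hb => if_pos (Finset.mem_Icc.1 hb)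
    rw [Finset.sum_congr rfl hcongr, Finset.sum_const, Nat.card_Icc, nsmul_eq_mul]
    simp
  have hbSN : (∑ i, bN i) ≤ SN - 1 := by
    have hsum : (∑ i, bN i) = (∑ i ∈ Finset.univ.filter (fun i => i < p), C i) + m p := by
      rw [hbN, Finset.sum_ite]
      congr 1
      rw [Finset.sum_ite_eq' (Finset.univ.filter (fun i : Fin I => ¬ i < p)) p (fun _ => m p)]
      simp [Finset.mem_filter]
    have hSN : SN = (∑ i ∈ Finset.univ.filter (fun i => i < p), C i) + C p := by
      have hins : Finset.univ.filter (fun t : Fin I => t ≤ p)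
          = insert p (Finset.univ.filter (fun t => t < p)) := by
        ext t
        simp only [Finset.mem_insert, Finset.mem_filter, Finset.mem_univ, true_and]
        constructor
        · intro h
          rcases eq_or_lt_of_le h with h | h
          · exact Or.inl h
          · exact Or.inr h
        · rintro (rfl | h)
          · exact le_refl _
          · exact le_of_lt h
      rw [hSNdef, hins, Finset.sum_insert (by simp [Finset.mem_filter])]
      omega
    omega
  have hS1 : (0:ℝ) ≤ (SN : ℝ) - 1 := by
    have : (1:ℝ) ≤ (SN:ℝ) := by exact_mod_cast hSN1
    linarith
  have hDd : Dd ≤ ENNReal.ofReal (μv * ((SN : ℝ) - 1) / Λ) := by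
    rw [hDddef, tsum_ev]
    have h1 : (∑ A : Finset (Fin I), ν (.d A) * (ddN C p (m p) (.d A) : ℝ≥0∞)) = 0 := by
      simp [ddN]
    rw [h1, zero_add]
    rw [show (∑' ij : Fin I × ℕ, ν (Ev.s ij.1 ij.2) * (ddN C p (m p) (Ev.s ij.1 ij.2) : ℝ≥0∞))
        = ∑' i : Fin I, ∑' j : ℕ, ν (Ev.s i j) * (ddN C p (m p) (Ev.s i j) : ℝ≥0∞) from
      ENNReal.tsum_prod (f := fun i j => ν (Ev.s i j) * (ddN C p (m p) (Ev.s i j) : ℝ≥0∞))]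
    rw [tsum_fintype]
    refine le_trans (Finset.sum_le_sum (fun i _ => hib i)) ?_
    have : (∑ i : Fin I, (bN i : ℝ≥0∞) * ENNReal.ofReal (μv / Λ))
        = ((∑ i, bN i : ℕ) : ℝ≥0∞) * ENNReal.ofReal (μv / Λ) := by
      rw [← Finset.sum_mul]
      congr 1
      push_cast
      rfl
    rw [this]
    refine le_trans (mul_le_mul_left (Nat.cast_le.2 hbSN) _) ?_
    rw [← ENNReal.ofReal_natCast, ← ENNReal.ofReal_mul (by positivity)]
    refine ENNReal.ofReal_le_ofReal ?_
    have hcast : ((SN - 1 : ℕ) : ℝ) = (SN : ℝ) - 1 := by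
      push_cast [Nat.cast_sub hSN1]
      ring
    rw [hcast]
    exact le_of_eq (by ring)
  -- combine
  have h5 := Summable.tsum_le_tsum hkey ENNReal.summable ENNReal.summable
  rw [hL, hR] at h5
  have hkey2 : ENNReal.ofReal (lamp / Λ) = ENNReal.ofReal (δp / Λ)
      + ENNReal.ofReal (μv * ((SN : ℝ) - 1) / Λ) := by
    rw [← ENNReal.ofReal_add (by positivity) (by positivity)]
    congr 1
    rw [hsplit, hSreal, add_div]
  have hDdne : Dd ≠ ⊤ := ne_top_of_le_ne_top ENNReal.ofReal_ne_top hDd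
  have h6 : ((m p : ℝ≥0∞) + ENNReal.ofReal (δp / Λ)) + Dd
      ≤ (∑' e : Ev I, ν e * ((Fenv C m M e).1 p : ℝ≥0∞)) + Dd := by
    calc ((m p : ℝ≥0∞) + ENNReal.ofReal (δp / Λ)) + Dd
        ≤ ((m p : ℝ≥0∞) + ENNReal.ofReal (δp / Λ)) + ENNReal.ofReal (μv * ((SN : ℝ) - 1) / Λ) :=
          add_le_add le_rfl hDd
      _ = (m p : ℝ≥0∞) + ENNReal.ofReal (lamp / Λ) := by rw [hkey2, add_assoc]
      _ ≤ _ := h5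
  exact (ENNReal.add_le_add_iff_right hDdne).1 h6

end AuxDrift
section AuxList

open Classical

variable {I : ℕ}

private lemma fenvIter_append (C : Fin I → ℕ) :
    ∀ (w₁ w₂ : List (Ev I)) (m M : Fin I → ℕ),
      FenvIter C m M (w₁ ++ w₂)
        = FenvIter C (FenvIter C m M w₁).1 (FenvIter C m M w₁).2 w₂
  | [], _, _, _ => rfl
  | a :: w₁, w₂, m, M => fenvIter_append C w₁ w₂ (Fenv C m M a).1 (Fenv C m M a).2

private lemma fenvIter_concat (C : Fin I → ℕ) (w : List (Ev I)) (e : Ev I) (m M : Fin I → ℕ) :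
    FenvIter C m M (w ++ [e]) = Fenv C (FenvIter C m M w).1 (FenvIter C m M w).2 e := by
  rw [fenvIter_append]
  rfl

private def HitL (C : Fin I → ℕ) (p : Fin I) (w : List (Ev I)) : Prop :=
  (FenvIter C 0 C w).1 p = C p

private def BLp (C : Fin I → ℕ) (p : Fin I) (w : List (Ev I)) : Prop :=
  ∀ s ≤ w.length, ¬ HitL C p (List.take s w)

private noncomputable def rhoL (C : Fin I → ℕ) (p : Fin I) (w : List (Ev I)) : ℕ :=
  sInf {s | w.length ≤ s ∨ HitL C p (List.take s w)}

private noncomputable def ZL (C : Fin I → ℕ) (p : Fin I) (w : List (Ev I)) : ℝ≥0∞ :=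
  ((FenvIter C 0 C (List.take (rhoL C p w) w)).1 p : ℝ≥0∞)

private lemma rhoL_le_length (C : Fin I → ℕ) (p : Fin I) (w : List (Ev I)) :
    rhoL C p w ≤ w.length :=
  Nat.sInf_le (Or.inl le_rfl)

private lemma rhoL_of_B (C : Fin I → ℕ) (p : Fin I) {w : List (Ev I)} (hB : BLp C p w) :
    rhoL C p w = w.length := by
  refine le_antisymm (rhoL_le_length C p w) (le_csInf ⟨w.length, Or.inl le_rfl⟩ ?_)
  rintro b (h | h)
  · exact h
  · by_contra hlt
    exact hB b (by omega) h

private lemma rhoL_app_of_B (C : Fin I → ℕ) (p : Fin I) {w : List (Ev I)} (e : Ev I)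
    (hB : BLp C p w) : rhoL C p (w ++ [e]) = w.length + 1 := by
  refine le_antisymm (Nat.sInf_le (Or.inl (by simp))) (le_csInf ⟨w.length + 1, Or.inl (by simp)⟩ ?_)
  rintro b (h | h)
  · simpa using h
  · by_contra hlt
    have hble : b ≤ w.length := by omega
    rw [List.take_append_of_le_length hble] at h
    exact hB b hble h

private lemma rhoL_app_of_not_B (C : Fin I → ℕ) (p : Fin I) {w : List (Ev I)} (e : Ev I)
    (hnB : ¬ BLp C p w) : rhoL C p (w ++ [e]) = rhoL C p w := by
  have hex : ∃ s, s ≤ w.length ∧ HitL C p (List.take s w) := by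
    by_contra hc
    push_neg at hc
    exact hnB fun s hs h => hc s hs h
  obtain ⟨s, hs, hhit⟩ := hex
  have hrle : rhoL C p w ≤ s := Nat.sInf_le (Or.inr hhit)
  have hmem := Nat.sInf_mem (⟨w.length, Or.inl le_rfl⟩ :
    {s | w.length ≤ s ∨ HitL C p (List.take s w)}.Nonempty)
  refine le_antisymm ?_ ?_
  · rcases hmem with h | h
    · have heq : rhoL C p w = w.length := le_antisymm (rhoL_le_length C p w) h
      have hsl : s = w.length := by omega
      have hhit2 : HitL C p (List.take (rhoL C p w) (w ++ [e])) := by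
        rw [heq, List.take_append_of_le_length le_rfl, ← hsl]
        exact hhit
      exact Nat.sInf_le (Or.inr hhit2)
    · have hhit2 : HitL C p (List.take (rhoL C p w) (w ++ [e])) := by
        rw [List.take_append_of_le_length (rhoL_le_length C p w)]
        exact h
      exact Nat.sInf_le (Or.inr hhit2)
  · have hmem' : (w ++ [e]).length ≤ rhoL C p (w ++ [e])
        ∨ HitL C p (List.take (rhoL C p (w ++ [e])) (w ++ [e])) :=
      Nat.sInf_mem (⟨(w ++ [e]).length, Or.inl le_rfl⟩ :
        {t | (w ++ [e]).length ≤ t ∨ HitL C p (List.take t (w ++ [e]))}.Nonempty)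
    rcases hmem' with h | h
    · have hlen : (w ++ [e]).length = w.length + 1 := by simp
      have h2 := rhoL_le_length C p w
      omega
    · by_cases hle : rhoL C p (w ++ [e]) ≤ w.length
      · rw [List.take_append_of_le_length hle] at h
        exact Nat.sInf_le (Or.inr h)
      · have h2 := rhoL_le_length C p w
        omega
  
private lemma zl_app_of_not_B (C : Fin I → ℕ) (p : Fin I) {w : List (Ev I)} (e : Ev I)
    (hnB : ¬ BLp C p w) : ZL C p (w ++ [e]) = ZL C p w := by
  rw [ZL, ZL, rhoL_app_of_not_B C p e hnB,
    List.take_append_of_le_length (rhoL_le_length C p w)]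

private lemma zl_of_B (C : Fin I → ℕ) (p : Fin I) {w : List (Ev I)} (hB : BLp C p w) :
    ZL C p w = ((FenvIter C 0 C w).1 p : ℝ≥0∞) := by
  rw [ZL, rhoL_of_B C p hB, List.take_length]

private lemma zl_app_of_B (C : Fin I → ℕ) (p : Fin I) {w : List (Ev I)} (e : Ev I)
    (hB : BLp C p w) :
    ZL C p (w ++ [e])
      = ((Fenv C (FenvIter C 0 C w).1 (FenvIter C 0 C w).2 e).1 p : ℝ≥0∞) := by
  rw [ZL, rhoL_app_of_B C p e hB,
    show w.length + 1 = (w ++ [e]).length by simp, List.take_length, fenvIter_concat]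

private lemma envInv_QL (C : Fin I → ℕ) (hC : ∀ i, 1 ≤ C i) (w : List (Ev I)) :
    EnvInv C (FenvIter C 0 C w) :=
  envInv_fenvIter C w 0 C ⟨fun i => Nat.zero_le _, fun i => le_rfl⟩

private lemma zl_le (C : Fin I → ℕ) (hC : ∀ i, 1 ≤ C i) (p : Fin I) (w : List (Ev I)) :
    ZL C p w ≤ (C p : ℝ≥0∞) := by
  have hinv := envInv_QL C hC (List.take (rhoL C p w) w)
  exact Nat.cast_le.2 ((hinv.1 p).trans (hinv.2 p))

private lemma lt_of_B (C : Fin I → ℕ) (hC : ∀ i, 1 ≤ C i) (p : Fin I) {w : List (Ev I)}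
    (hB : BLp C p w) : (FenvIter C 0 C w).1 p < C p := by
  have hinv := envInv_QL C hC w
  have hne : ¬ HitL C p w := by
    have := hB w.length le_rfl
    rwa [List.take_length] at this
  exact lt_of_le_of_ne ((hinv.1 p).trans (hinv.2 p)) hne

private lemma fword_succ (ω : ℕ → Ev I) (t : ℕ) :
    fword ω (t + 1) = fword ω t ++ [ω (t + 1)] := by
  simp [fword, List.range_succ]

private lemma fword_length (ω : ℕ → Ev I) (t : ℕ) : (fword ω t).length = t := by
  simp [fword]

private lemma fword_take (ω : ℕ → Ev I) {s t : ℕ} (h : s ≤ t) :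
    (fword ω t).take s = fword ω s := by
  simp [fword, ← List.map_take, List.take_range, Nat.min_eq_left h]

private lemma fword_eq_ofFn (ω : ℕ → Ev I) (t : ℕ) :
    fword ω t = List.ofFn (fun i : Fin t => ω (i.1 + 1)) := by
  induction t with
  | zero => rfl
  | succ t ih =>
    rw [fword_succ, ih, List.ofFn_succ']
    simp [List.concat_eq_append]

end AuxList
section AuxProb

open Classical

variable {I : ℕ}

private def pit (T : ℕ) (ω : ℕ → Ev I) : Fin T → Ev I := fun i => ω (i.1 + 1)

private def Cyl (T : ℕ) (v : Fin T → Ev I) : Set (ℕ → Ev I) :=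
  {ω | ∀ i : Fin T, ω (i.1 + 1) = v i}

private lemma cyl_meas (T : ℕ) (v : Fin T → Ev I) : MeasurableSet (Cyl T v) := by
  have h : Cyl T v = ⋂ i : Fin T, (fun ω : ℕ → Ev I => ω (i.1 + 1)) ⁻¹' {v i} := by
    ext ω
    simp [Cyl, Set.mem_iInter]
  rw [h]
  exact MeasurableSet.iInter fun i =>
    measurable_pi_apply (i.1 + 1) MeasurableSpace.measurableSet_top

private lemma meas_pit (T : ℕ) (Q : (Fin T → Ev I) → Prop) :
    MeasurableSet {ω : ℕ → Ev I | Q (pit T ω)} := by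
  have h : {ω : ℕ → Ev I | Q (pit T ω)} = ⋃ v : {v : Fin T → Ev I // Q v}, Cyl T v.1 := by
    ext ω
    simp only [Set.mem_setOf_eq, Set.mem_iUnion]
    constructor
    · intro hq
      exact ⟨⟨pit T ω, hq⟩, fun i => rfl⟩
    · rintro ⟨⟨v, hv⟩, hmem⟩
      have hveq : pit T ω = v := funext fun i => hmem i
      rwa [hveq]
  rw [h]
  exact MeasurableSet.iUnion fun v => cyl_meas T v.1

private lemma lstar (P : Measure (ℕ → Ev I)) (T : ℕ) (H : (Fin T → Ev I) → ℝ≥0∞) :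
    ∫⁻ ω, H (pit T ω) ∂P = ∑' v : Fin T → Ev I, H v * P (Cyl T v) := by
  have hpt : ∀ ω : ℕ → Ev I,
      (∑' v : Fin T → Ev I, (Cyl T v).indicator (fun _ => H v) ω) = H (pit T ω) := by
    intro ω
    rw [tsum_eq_single (pit T ω) ?_]
    · exact Set.indicator_of_mem (show ω ∈ Cyl T (pit T ω) from fun i => rfl) _
    · intro v hv
      exact Set.indicator_of_notMem (fun hmem => hv (funext fun i => (hmem i).symm)) _
  calc ∫⁻ ω, H (pit T ω) ∂P
      = ∫⁻ ω, (∑' v : Fin T → Ev I, (Cyl T v).indicator (fun _ => H v) ω) ∂P :=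
        lintegral_congr fun ω => (hpt ω).symm
    _ = ∑' v : Fin T → Ev I, ∫⁻ ω, (Cyl T v).indicator (fun _ => H v) ω ∂P :=
        lintegral_tsum fun v => (measurable_const.indicator (cyl_meas T v)).aemeasurable
    _ = ∑' v : Fin T → Ev I, H v * P (Cyl T v) := by
        refine tsum_congr fun v => ?_
        rw [lintegral_indicator (cyl_meas T v), setLIntegral_const]

private noncomputable def uext (T : ℕ) (v : Fin T → Ev I) : ℕ → Ev I :=
  fun t => if h : 1 ≤ t ∧ t ≤ T then v ⟨t - 1, by omega⟩ else Ev.d ∅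

private lemma uext_eval (T : ℕ) (v : Fin T → Ev I) {s : ℕ} (hs : s < T) :
    uext T v (s + 1) = v ⟨s, hs⟩ := by
  have hc : 1 ≤ s + 1 ∧ s + 1 ≤ T := ⟨by omega, by omega⟩
  simp only [uext]
  rw [dif_pos hc]
  all_goals exact congrArg v (Fin.ext (Nat.succ_sub_one s))

private lemma cyl_prob (C : Fin I → ℕ) (lam : Finset (Fin I) → ℝ) (μv Λ : ℝ)
    (P : Measure (ℕ → Ev I))
    (hiid : ∀ (T : Finset ℕ) (u : ℕ → Ev I),
        P {ω | ∀ t ∈ T, ω t = u t} = ∏ t ∈ T, probJ C lam μv Λ (u t))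
    (T : ℕ) (v : Fin T → Ev I) :
    P (Cyl T v) = ∏ i : Fin T, probJ C lam μv Λ (v i) := by
  have hset : Cyl T v = {ω | ∀ t ∈ (Finset.range T).image (· + 1), ω t = uext T v t} := by
    ext ω
    simp only [Cyl, Set.mem_setOf_eq, Finset.mem_image, Finset.mem_range]
    constructor
    · rintro h t ⟨s, hs, rfl⟩
      rw [uext_eval T v hs]
      exact h ⟨s, hs⟩
    · intro h i
      have h2 := h (i.1 + 1) ⟨i.1, i.2, rfl⟩
      rwa [uext_eval T v i.2] at h2
  rw [hset, hiid]
  rw [Finset.prod_image (fun a _ b _ h => by omega)]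
  rw [← Fin.prod_univ_eq_prod_range (fun s => probJ C lam μv Λ (uext T v (s + 1))) T]
  refine Finset.prod_congr rfl fun i _ => ?_
  rw [uext_eval T v i.2]

private noncomputable def snocEquiv (T : ℕ) : ((Fin T → Ev I) × Ev I) ≃ (Fin (T + 1) → Ev I) where
  toFun x := Fin.snoc x.1 x.2
  invFun w := (fun i => w i.castSucc, w (Fin.last T))
  left_inv x := by
    rcases x with ⟨v, e⟩
    refine Prod.ext ?_ ?_
    · funext i
      simp [Fin.snoc_castSucc]
    · simp [Fin.snoc_last]
  right_inv w := by
    funext i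
    refine Fin.lastCases ?_ ?_ i
    · simp [Fin.snoc_last]
    · intro j
      simp [Fin.snoc_castSucc]

private lemma ofFn_snoc (T : ℕ) (v : Fin T → Ev I) (e : Ev I) :
    List.ofFn (Fin.snoc v e : Fin (T + 1) → Ev I) = List.ofFn v ++ [e] := by
  rw [List.ofFn_succ']
  simp [Fin.snoc_castSucc, Fin.snoc_last, List.concat_eq_append]

private lemma cyl_prob_snoc (C : Fin I → ℕ) (lam : Finset (Fin I) → ℝ) (μv Λ : ℝ)
    (P : Measure (ℕ → Ev I))
    (hiid : ∀ (T : Finset ℕ) (u : ℕ → Ev I),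
        P {ω | ∀ t ∈ T, ω t = u t} = ∏ t ∈ T, probJ C lam μv Λ (u t))
    (T : ℕ) (v : Fin T → Ev I) (e : Ev I) :
    P (Cyl (T + 1) (Fin.snoc v e)) = P (Cyl T v) * probJ C lam μv Λ e := by
  rw [cyl_prob C lam μv Λ P hiid, cyl_prob C lam μv Λ P hiid, Fin.prod_univ_castSucc]
  simp [Fin.snoc_castSucc, Fin.snoc_last]

private lemma nu_sums_one (C : Fin I → ℕ) (lam : Finset (Fin I) → ℝ) (μv Λ : ℝ)
    (P : Measure (ℕ → Ev I)) [IsProbabilityMeasure P]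
    (hiid : ∀ (T : Finset ℕ) (u : ℕ → Ev I),
        P {ω | ∀ t ∈ T, ω t = u t} = ∏ t ∈ T, probJ C lam μv Λ (u t)) :
    ∑' e : Ev I, probJ C lam μv Λ e = 1 := by
  have hval : ∀ e : Ev I, P {ω : ℕ → Ev I | ω 1 = e} = probJ C lam μv Λ e := by
    intro e
    have h := hiid {1} (fun _ => e)
    simpa using h
  have hdisj : Pairwise (Function.onFun Disjoint fun e : Ev I => {ω : ℕ → Ev I | ω 1 = e}) := by
    intro e e' hne
    simp only [Function.onFun, Set.disjoint_left, Set.mem_setOf_eq]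
    intro ω h1 h2
    exact hne (by rw [← h1, ← h2])
  have hmeas : ∀ e : Ev I, MeasurableSet {ω : ℕ → Ev I | ω 1 = e} := by
    intro e
    have h : {ω : ℕ → Ev I | ω 1 = e} = (fun ω : ℕ → Ev I => ω 1) ⁻¹' {e} := rfl
    rw [h]
    exact measurable_pi_apply 1 MeasurableSpace.measurableSet_top
  have huniv : (⋃ e : Ev I, {ω : ℕ → Ev I | ω 1 = e}) = Set.univ := by
    ext ω
    simp only [Set.mem_iUnion, Set.mem_setOf_eq, Set.mem_univ, iff_true]
    exact ⟨ω 1, rfl⟩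
  have hsum := measure_iUnion (μ := P) hdisj hmeas
  rw [huniv, measure_univ] at hsum
  rw [tsum_congr (fun e => (hval e).symm)]
  exact hsum.symm

end AuxProb
section MainInd

open Classical

variable {I : ℕ}

private lemma meas_B (C : Fin I → ℕ) (p : Fin I) (t : ℕ) :
    MeasurableSet {ω : ℕ → Ev I | BLp C p (fword ω t)} := by
  have hseteq : {ω : ℕ → Ev I | BLp C p (fword ω t)}
      = {ω : ℕ → Ev I | BLp C p (List.ofFn (pit t ω))} := by
    ext ω
    rw [Set.mem_setOf_eq, Set.mem_setOf_eq, fword_eq_ofFn ω t]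
    exact Iff.rfl
  rw [hseteq]
  exact meas_pit t (fun v => BLp C p (List.ofFn v))

private lemma main_ind (C : Fin I → ℕ) (hC : ∀ i, 1 ≤ C i)
    (lam : Finset (Fin I) → ℝ) (μv Λ : ℝ) (hΛ0 : 0 < Λ) (hμv : 0 < μv)
    (hlamnn : ∀ A, 0 ≤ lam A)
    (p : Fin I) (δp : ℝ) (hδpos : 0 < δp)
    (hsplit : (∑ A ∈ Finset.univ.filter (fun A => p ∈ A), lam A)
        = δp + μv * ((∑ t ∈ Finset.univ.filter (fun t => t ≤ p), (C t : ℝ)) - 1))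
    (P : Measure (ℕ → Ev I)) [IsProbabilityMeasure P]
    (hiid : ∀ (T : Finset ℕ) (u : ℕ → Ev I),
        P {ω | ∀ t ∈ T, ω t = u t} = ∏ t ∈ T, probJ C lam μv Λ (u t)) :
    ∀ T : ℕ,
      ENNReal.ofReal (δp / Λ) * (∑ t ∈ Finset.range T, P {ω | BLp C p (fword ω t)})
        ≤ ∫⁻ ω, ZL C p (fword ω T) ∂P := by
  have hν1 := nu_sums_one C lam μv Λ P hiid
  have hofn : ∀ (t : ℕ) (ω : ℕ → Ev I), List.ofFn (pit t ω) = fword ω t :=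
    fun t ω => (fword_eq_ofFn ω t).symm
  intro T
  induction T with
  | zero => simp
  | succ T ih =>
    have h1 : ∫⁻ ω, ZL C p (fword ω T) ∂P
        = ∑' v : Fin T → Ev I, ZL C p (List.ofFn v) * P (Cyl T v) := by
      rw [← lstar P T (fun v => ZL C p (List.ofFn v))]
      exact lintegral_congr fun ω => by rw [hofn T ω]
    have h2 : ∫⁻ ω, ZL C p (fword ω (T + 1)) ∂P
        = ∑' v : Fin (T + 1) → Ev I, ZL C p (List.ofFn v) * P (Cyl (T + 1) v) := by
      rw [← lstar P (T + 1) (fun v => ZL C p (List.ofFn v))]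
      exact lintegral_congr fun ω => by rw [hofn (T + 1) ω]
    have h3 : P {ω | BLp C p (fword ω T)}
        = ∑' v : Fin T → Ev I,
            (if BLp C p (List.ofFn v) then (1 : ℝ≥0∞) else 0) * P (Cyl T v) := by
      rw [← lstar P T (fun v => if BLp C p (List.ofFn v) then (1 : ℝ≥0∞) else 0)]
      have hmeasB := meas_B C p T
      have hPind : (∫⁻ ω, Set.indicator {ω' : ℕ → Ev I | BLp C p (fword ω' T)}
          (fun _ => (1 : ℝ≥0∞)) ω ∂P) = P {ω' : ℕ → Ev I | BLp C p (fword ω' T)} := by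
        rw [lintegral_indicator hmeasB, setLIntegral_const, one_mul]
      rw [← hPind]
      refine lintegral_congr fun ω => ?_
      by_cases hb : BLp C p (fword ω T)
      · rw [Set.indicator_of_mem
            (show ω ∈ {ω' : ℕ → Ev I | BLp C p (fword ω' T)} from hb),
          if_pos (by rw [hofn T ω]; exact hb)]
      · rw [Set.indicator_of_notMem
            (show ω ∉ {ω' : ℕ → Ev I | BLp C p (fword ω' T)} from hb),
          if_neg (by rw [hofn T ω]; exact hb)]
    have hper : ∀ v : Fin T → Ev I,
        (ZL C p (List.ofFn v)
            + ENNReal.ofReal (δp / Λ) * (if BLp C p (List.ofFn v) then (1 : ℝ≥0∞) else 0))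
            * P (Cyl T v)
          ≤ ∑' e : Ev I, ZL C p (List.ofFn v ++ [e]) * P (Cyl (T + 1) (Fin.snoc v e)) := by
      intro v
      have hprob : ∀ e, P (Cyl (T + 1) (Fin.snoc v e)) = P (Cyl T v) * probJ C lam μv Λ e :=
        cyl_prob_snoc C lam μv Λ P hiid T v
      by_cases hB : BLp C p (List.ofFn v)
      · have hinv := envInv_QL C hC (List.ofFn v)
        have hlt := lt_of_B C hC p hB
        have hdrift := drift C hC lam μv Λ hΛ0 hμv hlamnn p δp hδpos hsplit hν1
          hinv.1 hinv.2 hlt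
        have hz : ∀ e : Ev I, ZL C p (List.ofFn v ++ [e]) * P (Cyl (T + 1) (Fin.snoc v e))
            = P (Cyl T v) * (probJ C lam μv Λ e
                * ((Fenv C (FenvIter C 0 C (List.ofFn v)).1 (FenvIter C 0 C (List.ofFn v)).2 e).1 p
                    : ℝ≥0∞)) := by
          intro e
          rw [zl_app_of_B C p e hB, hprob e]
          ring
        rw [tsum_congr hz, ENNReal.tsum_mul_left]
        rw [if_pos hB, mul_one, zl_of_B C p hB]
        rw [mul_comm]
        exact mul_le_mul_right hdrift _
      · have hz : ∀ e : Ev I, ZL C p (List.ofFn v ++ [e]) * P (Cyl (T + 1) (Fin.snoc v e))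
            = P (Cyl T v) * (probJ C lam μv Λ e * ZL C p (List.ofFn v)) := by
          intro e
          rw [zl_app_of_not_B C p e hB, hprob e]
          ring
        rw [tsum_congr hz, ENNReal.tsum_mul_left, ENNReal.tsum_mul_right, hν1, one_mul]
        rw [if_neg hB, mul_zero, add_zero]
        exact le_of_eq (mul_comm _ _)
    have hstep : (∫⁻ ω, ZL C p (fword ω T) ∂P)
        + ENNReal.ofReal (δp / Λ) * P {ω | BLp C p (fword ω T)}
        ≤ ∫⁻ ω, ZL C p (fword ω (T + 1)) ∂P := by
      rw [h1, h2, h3]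
      calc (∑' v : Fin T → Ev I, ZL C p (List.ofFn v) * P (Cyl T v))
          + ENNReal.ofReal (δp / Λ)
            * ∑' v : Fin T → Ev I,
                (if BLp C p (List.ofFn v) then (1 : ℝ≥0∞) else 0) * P (Cyl T v)
          = ∑' v : Fin T → Ev I,
              (ZL C p (List.ofFn v)
                + ENNReal.ofReal (δp / Λ)
                  * (if BLp C p (List.ofFn v) then (1 : ℝ≥0∞) else 0)) * P (Cyl T v) := by
            rw [← ENNReal.tsum_mul_left, ← ENNReal.tsum_add]
            refine tsum_congr fun v => ?_
            ring
        _ ≤ ∑' v : Fin T → Ev I, ∑' e : Ev I,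
              ZL C p (List.ofFn v ++ [e]) * P (Cyl (T + 1) (Fin.snoc v e)) :=
            Summable.tsum_le_tsum hper ENNReal.summable ENNReal.summable
        _ = ∑' v : Fin (T + 1) → Ev I, ZL C p (List.ofFn v) * P (Cyl (T + 1) v) := by
            rw [← Equiv.tsum_eq (snocEquiv T)
              (fun v : Fin (T + 1) → Ev I => ZL C p (List.ofFn v) * P (Cyl (T + 1) v))]
            rw [← ENNReal.tsum_prod (f := fun (v : Fin T → Ev I) (e : Ev I) =>
              ZL C p (List.ofFn v ++ [e]) * P (Cyl (T + 1) (Fin.snoc v e)))]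
            refine tsum_congr fun x => ?_
            have hx : (snocEquiv T) x = Fin.snoc x.1 x.2 := rfl
            rw [hx, ofFn_snoc]
    rw [Finset.sum_range_succ, mul_add]
    calc ENNReal.ofReal (δp / Λ) * (∑ t ∈ Finset.range T, P {ω | BLp C p (fword ω t)})
          + ENNReal.ofReal (δp / Λ) * P {ω | BLp C p (fword ω T)}
        ≤ (∫⁻ ω, ZL C p (fword ω T) ∂P)
          + ENNReal.ofReal (δp / Λ) * P {ω | BLp C p (fword ω T)} := add_le_add ih le_rfl
      _ ≤ _ := hstep

end MainInd
/-- Lemma D.1: hitting time of full capacity for the lower envelope. -/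
theorem stmt19 (I : ℕ) (hI : 1 ≤ I) (C : Fin I → ℕ) (hC : ∀ i, 1 ≤ C i)
    (lam : Finset (Fin I) → ℝ) (hlamnn : ∀ A, 0 ≤ lam A) (hlam0 : lam ∅ = 0)
    (μv : ℝ) (hμv : 0 < μv)
    (Λ : ℝ) (hΛ : Λ = (∑ A : Finset (Fin I), lam A) + μv * ∑ i, (C i : ℝ))
    (lamI : Fin I → ℝ)
    (hlamI : ∀ i, lamI i = ∑ A ∈ Finset.univ.filter (fun A => i ∈ A), lam A)
    (P : Measure (ℕ → Ev I)) [IsProbabilityMeasure P]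
    (hiid : ∀ (T : Finset ℕ) (u : ℕ → Ev I),
        P {ω | ∀ t ∈ T, ω t = u t} = ∏ t ∈ T, probJ C lam μv Λ (u t))
    (p : Fin I) (δp : ℝ)
    (hδp : δp = lamI p - μv * ((∑ t ∈ Finset.univ.filter (fun t => t ≤ p), (C t : ℝ)) - 1))
    (hδpos : 0 < δp) :
    ∫⁻ ω, sInf {r : ℝ≥0∞ | ∃ t : ℕ, r = t ∧ (FenvIter C 0 C (fword ω t)).1 p = C p} ∂P
      ≤ ENNReal.ofReal (Λ * (C p : ℝ) / δp) := by
  classical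
  have hΛ0 : 0 < Λ := by
    rw [hΛ]
    have h1 : 0 ≤ ∑ A : Finset (Fin I), lam A := Finset.sum_nonneg fun A _ => hlamnn A
    have h2 : 0 < ∑ i, (C i : ℝ) := by
      have hne : Nonempty (Fin I) := ⟨⟨0, hI⟩⟩
      refine Finset.sum_pos (fun i _ => by exact_mod_cast hC i) Finset.univ_nonempty
    nlinarith
  have hsplit : (∑ A ∈ Finset.univ.filter (fun A => p ∈ A), lam A)
      = δp + μv * ((∑ t ∈ Finset.univ.filter (fun t => t ≤ p), (C t : ℝ)) - 1) := by
    rw [← hlamI p, hδp]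
    ring
  have hmain := main_ind C hC lam μv Λ hΛ0 hμv hlamnn p δp hδpos hsplit P hiid
  have hZle : ∀ T : ℕ, (∫⁻ ω, ZL C p (fword ω T) ∂P) ≤ (C p : ℝ≥0∞) := by
    intro T
    calc ∫⁻ ω, ZL C p (fword ω T) ∂P
        ≤ ∫⁻ _, (C p : ℝ≥0∞) ∂P := lintegral_mono fun ω => zl_le C hC p _
      _ = (C p : ℝ≥0∞) := by rw [lintegral_const, measure_univ, mul_one]
  set a := ENNReal.ofReal (δp / Λ) with ha
  have ha0 : a ≠ 0 := by
    rw [ha, Ne, ENNReal.ofReal_eq_zero, not_le]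
    exact div_pos hδpos hΛ0
  have haT : a ≠ ⊤ := ENNReal.ofReal_ne_top
  have hPsum : ∀ T : ℕ,
      (∑ t ∈ Finset.range T, P {ω | BLp C p (fword ω t)}) ≤ (C p : ℝ≥0∞) / a := by
    intro T
    rw [ENNReal.le_div_iff_mul_le (Or.inl ha0) (Or.inl haT)]
    exact le_trans (le_of_eq (mul_comm _ _)) ((hmain T).trans (hZle T))
  have htsum : (∑' t : ℕ, P {ω | BLp C p (fword ω t)}) ≤ (C p : ℝ≥0∞) / a :=
    ENNReal.tsum_le_of_sum_range_le hPsum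
  have hτ : ∀ ω : ℕ → Ev I,
      sInf {r : ℝ≥0∞ | ∃ t : ℕ, r = t ∧ (FenvIter C 0 C (fword ω t)).1 p = C p}
        ≤ ∑' t : ℕ, Set.indicator {ω' : ℕ → Ev I | BLp C p (fword ω' t)}
            (fun _ => (1 : ℝ≥0∞)) ω := by
    intro ω
    by_cases hex : ∃ t : ℕ, (FenvIter C 0 C (fword ω t)).1 p = C p
    · have hn1 : (FenvIter C 0 C (fword ω (Nat.find hex))).1 p = C p := Nat.find_spec hex
      have hle1 : sInf {r : ℝ≥0∞ | ∃ t : ℕ, r = t ∧ (FenvIter C 0 C (fword ω t)).1 p = C p}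
          ≤ ((Nat.find hex : ℕ) : ℝ≥0∞) := sInf_le ⟨Nat.find hex, rfl, hn1⟩
      refine hle1.trans ?_
      have hBt : ∀ t < Nat.find hex, ω ∈ {ω' : ℕ → Ev I | BLp C p (fword ω' t)} := by
        intro t ht s hs
        rw [fword_length] at hs
        rw [fword_take ω hs]
        exact Nat.find_min hex (lt_of_le_of_lt hs ht)
      calc ((Nat.find hex : ℕ) : ℝ≥0∞)
          = ∑ t ∈ Finset.range (Nat.find hex), (1 : ℝ≥0∞) := by simp
        _ = ∑ t ∈ Finset.range (Nat.find hex),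
              Set.indicator {ω' : ℕ → Ev I | BLp C p (fword ω' t)} (fun _ => (1 : ℝ≥0∞)) ω := by
            refine Finset.sum_congr rfl fun t ht => ?_
            rw [Set.indicator_of_mem (hBt t (Finset.mem_range.1 ht))]
        _ ≤ _ := ENNReal.sum_le_tsum _
    · push_neg at hex
      have hall : ∀ t : ℕ, Set.indicator {ω' : ℕ → Ev I | BLp C p (fword ω' t)}
          (fun _ => (1 : ℝ≥0∞)) ω = 1 := by
        intro t
        refine Set.indicator_of_mem ?_ _
        intro s hs
        rw [fword_length] at hs
        rw [fword_take ω hs]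
        exact hex s
      rw [tsum_congr hall, ENNReal.tsum_const_eq_top_of_ne_zero one_ne_zero]
      exact le_top
  calc ∫⁻ ω, sInf {r : ℝ≥0∞ | ∃ t : ℕ, r = t ∧ (FenvIter C 0 C (fword ω t)).1 p = C p} ∂P
      ≤ ∫⁻ ω, (∑' t : ℕ, Set.indicator {ω' : ℕ → Ev I | BLp C p (fword ω' t)}
          (fun _ => (1 : ℝ≥0∞)) ω) ∂P := lintegral_mono hτ
    _ = ∑' t : ℕ, P {ω' : ℕ → Ev I | BLp C p (fword ω' t)} := by
        rw [lintegral_tsum (fun t => (measurable_const.indicator (meas_B C p t)).aemeasurable)]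
        refine tsum_congr fun t => ?_
        rw [lintegral_indicator (meas_B C p t), setLIntegral_const, one_mul]
    _ ≤ (C p : ℝ≥0∞) / a := htsum
    _ ≤ ENNReal.ofReal (Λ * (C p : ℝ) / δp) := by
        rw [ha, ← ENNReal.ofReal_natCast (C p), ← ENNReal.ofReal_div_of_pos (div_pos hδpos hΛ0)]
        refine ENNReal.ofReal_le_ofReal (le_of_eq ?_)
        rw [div_div_eq_mul_div, mul_comm]

end ATO
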